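/- With the same setup as the concatenation lemma (μ^{(1)} ⪯ λ^{(q)}_{N_1}(b^{(1)}), μ^{(2)} ⪯ λ^{(q)}_{N_2}(b^{(2)}), b the composed tuple), the quantity Δ is additive: Δ_b(μ^{(1)} ∪ μ^{(2)}) = Δ_{b^{(1)}}(μ^{(1)}) + Δ_{b^{(2)}}(μ^{(2)}), where Δ_b(μ) = Σ_j ((q(j−1)+b_j)² − μ_j²). -/

import Mathlib

/-- Dominance order on tuples: all tail sums of `μ` are at most those of `lam`. -/
def DominatedBy {k : ℕ} (μ lam : Fin k → ℕ) : Prop :=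
  ∀ i : Fin k, ∑ j ∈ Finset.Ici i, μ j ≤ ∑ j ∈ Finset.Ici i, lam j

/-- The quantity `Δ_b(μ) = Σ_j ((q(j−1)+b_j)² − μ_j²)` is additive under
concatenation of partitions dominated by root partitions. -/
theorem delta_additive (q N₁ N₂ : ℕ) (hq : 1 ≤ q) (hN₁ : 1 ≤ N₁) (hN₂ : 1 ≤ N₂)
    (b₁ : Fin N₁ → ℕ) (b₂ : Fin N₂ → ℕ) (hb₁ : Monotone b₁) (hb₂ : Monotone b₂)
    (μ₁ : Fin N₁ → ℕ) (μ₂ : Fin N₂ → ℕ) (hμ₁ : Monotone μ₁) (hμ₂ : Monotone μ₂)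
    (hsum₁ : ∑ j, μ₁ j = ∑ j : Fin N₁, (q * (j : ℕ) + b₁ j))
    (hsum₂ : ∑ j, μ₂ j = ∑ j : Fin N₂, (q * (j : ℕ) + b₂ j))
    (hdom₁ : DominatedBy μ₁ (fun j => q * (j : ℕ) + b₁ j))
    (hdom₂ : DominatedBy μ₂ (fun j => q * (j : ℕ) + b₂ j)) :
    ∑ j : Fin (N₁ + N₂),
        (((q * (j : ℕ) + Fin.append b₁ (fun i => b₁ ⟨N₁ - 1, by omega⟩ + b₂ i) j : ℕ) : ℤ) ^ 2
          - ((Fin.append μ₁ (fun i => q * N₁ + b₁ ⟨N₁ - 1, by omega⟩ + μ₂ i) j : ℕ) : ℤ) ^ 2) =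
      (∑ j : Fin N₁, (((q * (j : ℕ) + b₁ j : ℕ) : ℤ) ^ 2 - ((μ₁ j : ℕ) : ℤ) ^ 2)) +
        ∑ j : Fin N₂, (((q * (j : ℕ) + b₂ j : ℕ) : ℤ) ^ 2 - ((μ₂ j : ℕ) : ℤ) ^ 2) := by

  rw [Fin.sum_univ_add]
  have key : ∑ i : Fin N₂, (((q * (i:ℕ) + b₂ i : ℕ) : ℤ) - (μ₂ i : ℤ)) = 0 := by
    rw [Finset.sum_sub_distrib, sub_eq_zero]
    have := congrArg (Nat.cast : ℕ → ℤ) hsum₂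
    push_cast at this ⊢
    linarith [this]
  have h1 : ∀ j : Fin N₁,
      (((q * ((Fin.castAdd N₂ j : Fin (N₁+N₂)) : ℕ) +
        Fin.append b₁ (fun i => b₁ ⟨N₁ - 1, by omega⟩ + b₂ i) (Fin.castAdd N₂ j) : ℕ) : ℤ) ^ 2
        - ((Fin.append μ₁ (fun i => q * N₁ + b₁ ⟨N₁ - 1, by omega⟩ + μ₂ i) (Fin.castAdd N₂ j) : ℕ) : ℤ) ^ 2)
      = (((q * (j:ℕ) + b₁ j : ℕ) : ℤ) ^ 2 - ((μ₁ j : ℕ) : ℤ) ^ 2) := by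
    intro j
    simp [Fin.append_left]
  rw [Finset.sum_congr rfl (fun j _ => h1 j)]
  congr 1
  set c : ℤ := q * N₁ + b₁ ⟨N₁ - 1, by omega⟩ with hc
  have h2 : ∀ i : Fin N₂,
      (((q * ((Fin.natAdd N₁ i : Fin (N₁+N₂)) : ℕ) +
        Fin.append b₁ (fun i => b₁ ⟨N₁ - 1, by omega⟩ + b₂ i) (Fin.natAdd N₁ i) : ℕ) : ℤ) ^ 2
        - ((Fin.append μ₁ (fun i => q * N₁ + b₁ ⟨N₁ - 1, by omega⟩ + μ₂ i) (Fin.natAdd N₁ i) : ℕ) : ℤ) ^ 2)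
      = (((q * (i:ℕ) + b₂ i : ℕ) : ℤ) ^ 2 - ((μ₂ i : ℕ) : ℤ) ^ 2)
        + 2 * c * (((q * (i:ℕ) + b₂ i : ℕ) : ℤ) - (μ₂ i : ℤ)) := by
    intro i
    simp only [Fin.append_right, Fin.coe_natAdd]
    push_cast
    ring
  rw [Finset.sum_congr rfl (fun i _ => h2 i), Finset.sum_add_distrib,
    ← Finset.mul_sum, key, mul_zero, add_zero]
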